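/- In the recursive max-linear model with propagating noise, the random max-linear coefficients satisfy the idempotency relation b̄_{ji} = ⋁_{k ∈ V} (b̄_{jk} b̄_{ki} / b̄_{kk}) for all nodes j, i, where b̄_{kk} = ε_k. -/
import Mathlib


open Matrix Finset MeasureTheory ProbabilityTheory Filter

noncomputable section

/-- Max-times (tropical) matrix product: `(F ⊙ G) i j = ⋁ k, F i k * G k j`. -/
def mOdot {m n p : ℕ} (F : Matrix (Fin m) (Fin n) NNReal) (G : Matrix (Fin n) (Fin p) NNReal) :
    Matrix (Fin m) (Fin p) NNReal :=
  Matrix.of fun i j => Finset.univ.sup fun k => F i k * G k j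

/-- Entrywise maximum of two matrices. -/
def mSup {m n : ℕ} (A B : Matrix (Fin m) (Fin n) NNReal) : Matrix (Fin m) (Fin n) NNReal :=
  Matrix.of fun i j => A i j ⊔ B i j

/-- Max-times power: `A^{⊙0} = I`, `A^{⊙(k+1)} = A^{⊙k} ⊙ A`. -/
def mPow {d : ℕ} (A : Matrix (Fin d) (Fin d) NNReal) : ℕ → Matrix (Fin d) (Fin d) NNReal
  | 0 => 1
  | k + 1 => mOdot (mPow A k) A

/-- Kleene star: `B = ⋁_{k=0}^{d-1} C^{⊙k}`. -/
def kleene {d : ℕ} (C : Matrix (Fin d) (Fin d) NNReal) : Matrix (Fin d) (Fin d) NNReal :=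
  Matrix.of fun i j => (Finset.range d).sup fun k => mPow C k i j

/-- `IsWalk C i j l` : `l` is the list of vertices after `i` of a walk from `i` to `j`
    along positive entries of `C`. -/
def IsWalk {d : ℕ} (C : Matrix (Fin d) (Fin d) NNReal) : Fin d → Fin d → List (Fin d) → Prop
  | i, j, [] => i = j
  | i, j, k :: l => 0 < C i k ∧ IsWalk C k j l

/-- Deterministic path weight: product of edge weights along a walk. -/
def walkWeight {d : ℕ} (C : Matrix (Fin d) (Fin d) NNReal) : Fin d → List (Fin d) → NNReal
  | _, [] => 1
  | i, k :: l => C i k * walkWeight C k l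

/-- Acyclicity: the only walk from a vertex to itself is the empty one. -/
def Acyclic {d : ℕ} (C : Matrix (Fin d) (Fin d) NNReal) : Prop :=
  ∀ i l, IsWalk C i i l → l = []

/-- Non-noisy ML coefficient: maximal deterministic path weight from `j` to `i`
    (`1` on the diagonal; `0` if there is no path). -/
def detB {d : ℕ} (C : Matrix (Fin d) (Fin d) NNReal) (j i : Fin d) : NNReal :=
  sSup {w | ∃ l, IsWalk C j i l ∧ w = walkWeight C j l}

/-- Noisy path weight (without the initial noise factor `ε j`):
    `∏_l c_{k_l k_{l+1}} ε_{k_{l+1}}` along a walk. -/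
def noisyWeight {d : ℕ} (C : Matrix (Fin d) (Fin d) NNReal) (ε : Fin d → NNReal) :
    Fin d → List (Fin d) → NNReal
  | _, [] => 1
  | i, k :: l => C i k * ε k * noisyWeight C ε k l

/-- Random (noisy) ML coefficient `b̄_{ji}`: maximal random path weight
    `d̄_{ji}(p) = ε_j ∏ c ε` from `j` to `i`; equals `ε j` on the diagonal,
    `0` if `j` is not an ancestor of `i`. -/
def barB {d : ℕ} (C : Matrix (Fin d) (Fin d) NNReal) (ε : Fin d → NNReal) (j i : Fin d) :
    NNReal :=
  sSup {w | ∃ l, IsWalk C j i l ∧ w = ε j * noisyWeight C ε j l}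

/-- `j` is a strict ancestor of `i` (there exists a nonempty path). -/
def Reach {d : ℕ} (C : Matrix (Fin d) (Fin d) NNReal) (j i : Fin d) : Prop :=
  ∃ l, l ≠ [] ∧ IsWalk C j i l

/-- Max-times product of a row vector with a matrix. -/
def vOdot {d : ℕ} (x : Fin d → NNReal) (A : Matrix (Fin d) (Fin d) NNReal) : Fin d → NNReal :=
  fun j => Finset.univ.sup fun k => x k * A k j

/-- Componentwise maximum of two vectors. -/
def vSup {d : ℕ} (x y : Fin d → NNReal) : Fin d → NNReal := fun i => x i ⊔ y i

/-- Maximum of `f k` over all `k` satisfying `P` (0 if there is none). -/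
def supOver {d : ℕ} (P : Fin d → Prop) (f : Fin d → NNReal) : NNReal :=
  sSup {w | ∃ k, P k ∧ w = f k}

end

lemma isWalk_append {d : ℕ} {C : Matrix (Fin d) (Fin d) NNReal} {l2 : List (Fin d)} :
    ∀ {l1 : List (Fin d)} {j k i : Fin d}, IsWalk C j k l1 → IsWalk C k i l2 →
      IsWalk C j i (l1 ++ l2)
  | [], j, k, i, h1, h2 => by
      have : j = k := h1
      subst this; simpa using h2
  | a :: t, j, k, i, h1, h2 => ⟨h1.1, isWalk_append h1.2 h2⟩

lemma noisyWeight_append {d : ℕ} (C : Matrix (Fin d) (Fin d) NNReal) (ε : Fin d → NNReal) :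
    ∀ {l1 : List (Fin d)} {j k : Fin d}, IsWalk C j k l1 → ∀ l2,
      noisyWeight C ε j (l1 ++ l2) = noisyWeight C ε j l1 * noisyWeight C ε k l2
  | [], j, k, h1, l2 => by
      have : j = k := h1
      subst this; simp [noisyWeight]
  | a :: t, j, k, h1, l2 => by
      simp only [List.cons_append, noisyWeight, List.append_eq, noisyWeight_append C ε h1.2 l2, mul_assoc]

lemma walk_split {d : ℕ} {C : Matrix (Fin d) (Fin d) NNReal} :
    ∀ (l1 : List (Fin d)) (x : Fin d) (l2 : List (Fin d)) (a b : Fin d),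
      IsWalk C a b (l1 ++ x :: l2) → IsWalk C a x (l1 ++ [x])
  | [], x, l2, a, b, h => ⟨h.1, rfl⟩
  | c :: t, x, l2, a, b, h => ⟨h.1, walk_split t x l2 c b h.2⟩

lemma walk_nodup {d : ℕ} {C : Matrix (Fin d) (Fin d) NNReal} (hacyc : Acyclic C) :
    ∀ (l : List (Fin d)) (j i : Fin d), IsWalk C j i l → (j :: l).Nodup := by
  intro l
  induction l with
  | nil => intro j i _; simp
  | cons k t ih =>
    intro j i h
    obtain ⟨hjk, hw⟩ := h
    refine List.nodup_cons.mpr ⟨?_, ih k i hw⟩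
    intro hmem
    rcases List.mem_cons.mp hmem with hjk' | hjt
    · subst hjk'
      have : IsWalk C j j ([j]) := ⟨hjk, rfl⟩
      simpa using hacyc j ([j]) this
    · obtain ⟨s, t', hst⟩ := List.append_of_mem hjt
      subst hst
      have hsplit : IsWalk C k j (s ++ [j]) := walk_split s j t' k i hw
      have : IsWalk C j j (k :: (s ++ [j])) := ⟨hjk, hsplit⟩
      simpa using hacyc j (k :: (s ++ [j])) this

lemma barB_set_finite {d : ℕ} (C : Matrix (Fin d) (Fin d) NNReal) (ε : Fin d → NNReal)
    (hacyc : Acyclic C) (j i : Fin d) :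
    {w | ∃ l, IsWalk C j i l ∧ w = ε j * noisyWeight C ε j l}.Finite := by
  have hsub : {w | ∃ l, IsWalk C j i l ∧ w = ε j * noisyWeight C ε j l} ⊆
      (fun l => ε j * noisyWeight C ε j l) '' {l : List (Fin d) | l.length ≤ d} := by
    rintro w ⟨l, hw, rfl⟩
    refine ⟨l, ?_, rfl⟩
    have hnd : (j :: l).Nodup := walk_nodup hacyc l j i hw
    have : l.Nodup := (List.nodup_cons.mp hnd).2
    simpa using this.length_le_card
  exact ((List.finite_length_le (Fin d) d).image _).subset hsub

lemma barB_diag {d : ℕ} (C : Matrix (Fin d) (Fin d) NNReal) (ε : Fin d → NNReal)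
    (hacyc : Acyclic C) (k : Fin d) : barB C ε k k = ε k := by
  have hset : {w | ∃ l, IsWalk C k k l ∧ w = ε k * noisyWeight C ε k l} = {ε k} := by
    ext w
    constructor
    · rintro ⟨l, hw, rfl⟩
      have : l = [] := hacyc k l hw
      subst this
      simp [noisyWeight]
    · rintro rfl
      exact ⟨[], rfl, by simp [noisyWeight]⟩
  rw [barB, hset, csSup_singleton]

/-- the random ML coefficients satisfy the idempotency relation
`b̄_{ji} = ⋁_{k ∈ V} b̄_{jk} b̄_{ki} / b̄_{kk}` (with `b̄_{kk} = ε_k`). -/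
theorem barB_idempotency (d : ℕ) (C : Matrix (Fin d) (Fin d) NNReal) (ε : Fin d → NNReal)
    (hacyc : Acyclic C) (hε : ∀ k, 1 ≤ ε k) :
    ∀ j i : Fin d,
      barB C ε j i = Finset.univ.sup fun k => barB C ε j k * barB C ε k i / barB C ε k k := by
  intro j i
  have hεne : ∀ k, ε k ≠ 0 := fun k => by
    intro h; have := hε k; rw [h] at this; exact absurd this (by simp)
  refine le_antisymm ?_ ?_
  · -- take k = i
    have hi : barB C ε j i * barB C ε i i / barB C ε i i = barB C ε j i := by
      rw [barB_diag C ε hacyc i]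
      exact mul_div_cancel_right₀ _ (hεne i)
    calc barB C ε j i = barB C ε j i * barB C ε i i / barB C ε i i := hi.symm
      _ ≤ _ := Finset.le_sup (f := fun k => barB C ε j k * barB C ε k i / barB C ε k k) (Finset.mem_univ i)
  · refine Finset.sup_le fun k _ => ?_
    rw [barB_diag C ε hacyc k, div_le_iff₀ (zero_lt_iff.mpr (hεne k))]
    -- show barB j k * barB k i ≤ barB j i * ε k
    rcases Set.eq_empty_or_nonempty
        {w | ∃ l, IsWalk C j k l ∧ w = ε j * noisyWeight C ε j l} with h1 | h1
    · have : barB C ε j k = 0 := by rw [barB, h1, csSup_empty]; rfl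
      simp [this]
    rcases Set.eq_empty_or_nonempty
        {w | ∃ l, IsWalk C k i l ∧ w = ε k * noisyWeight C ε k l} with h2 | h2
    · have : barB C ε k i = 0 := by rw [barB, h2, csSup_empty]; rfl
      simp [this]
    obtain ⟨l1, hw1, he1⟩ := h1.csSup_mem (barB_set_finite C ε hacyc j k)
    obtain ⟨l2, hw2, he2⟩ := h2.csSup_mem (barB_set_finite C ε hacyc k i)
    have hmem : ε j * noisyWeight C ε j (l1 ++ l2) ∈
        {w | ∃ l, IsWalk C j i l ∧ w = ε j * noisyWeight C ε j l} :=
      ⟨l1 ++ l2, isWalk_append hw1 hw2, rfl⟩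
    have hle : ε j * noisyWeight C ε j (l1 ++ l2) ≤ barB C ε j i :=
      le_csSup (barB_set_finite C ε hacyc j i).bddAbove hmem
    have heq : barB C ε j k * barB C ε k i =
        (ε j * noisyWeight C ε j (l1 ++ l2)) * ε k := by
      rw [barB, barB, he1, he2, noisyWeight_append C ε hw1 l2]
      ring
    rw [heq]
    exact mul_le_mul_left hle _
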